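/- Let α₁, α₃, β₂, β₆ be real numbers with α₃β₆ ≠ 0, and suppose that α₁/α₃ ∉ ℚ or β₂/β₆ − α₁/α₃ ∉ ℚ. Let I be a nonempty open interval contained in {x ∈ ℝ : x > 0 and β₆x + α₃ > 0}. Then the function Ω(x) = x^{α₁/α₃}·(β₆x + α₃)^{β₂/β₆ − α₁/α₃} is transcendental over the rational functions on I: there is no nonzero polynomial P ∈ ℝ[X,Y] in two variables such that P(x, Ω(x)) = 0 for all x ∈ I. (Verification of condition (H1) in Section 4.1 of the paper.) -/

import Mathlib

open Real

open Filter Topology Polynomial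



lemma master {θ : ℝ} (hθ : Irrational θ) (n : ℕ) (q : ℕ → Polynomial ℝ)
    (v : ℕ → ℝ → ℝ) (K : ℕ → ℝ) (hK : ∀ j, j ≤ n → 0 < K j)
    (hv : ∀ j, j ≤ n → Tendsto (v j) (𝓝[>] (0:ℝ)) (𝓝 (K j)))
    {δ : ℝ} (hδ : 0 < δ)
    (hsum : ∀ y ∈ Set.Ioo (0:ℝ) δ,
      ∑ j ∈ Finset.range (n+1), (q j).eval y * y ^ ((j:ℝ) * θ) * v j y = 0) :
    ∀ j, j ≤ n → q j = 0 := by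
  by_contra hcon
  push_neg at hcon
  obtain ⟨j₀, hj₀n, hj₀⟩ := hcon
  classical
  set S : Finset ℕ := (Finset.range (n+1)).filter (fun j => q j ≠ 0) with hS
  have hj₀S : j₀ ∈ S := by
    simp only [hS, Finset.mem_filter, Finset.mem_range]
    exact ⟨by omega, hj₀⟩
  set m : ℕ → ℕ := fun j => (q j).rootMultiplicity 0 with hm
  set e : ℕ → ℝ := fun j => (m j : ℝ) + (j:ℝ) * θ with he
  obtain ⟨j₁, hj₁S, hj₁min⟩ := S.exists_min_image e ⟨j₀, hj₀S⟩
  have hq₁ : q j₁ ≠ 0 := (Finset.mem_filter.1 hj₁S).2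
  have hlt : ∀ j ∈ S, j ≠ j₁ → e j₁ < e j := by
    intro j hjS hne
    rcases lt_or_eq_of_le (hj₁min j hjS) with hh | hh
    · exact hh
    · exfalso
      apply hθ
      refine ⟨((m j₁ : ℚ) - m j) / ((j:ℚ) - j₁), ?_⟩
      have hne' : (j:ℝ) - (j₁:ℝ) ≠ 0 := sub_ne_zero.2 (by exact_mod_cast hne)
      push_cast
      rw [div_eq_iff hne']
      simp only [he] at hh
      linarith
  set r : ℕ → Polynomial ℝ := fun j => (q j) /ₘ (X - C 0) ^ (m j) with hr
  have hrq : ∀ j, ∀ y : ℝ, (q j).eval y = y ^ (m j) * (r j).eval y := by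
    intro j y
    conv_lhs => rw [← Polynomial.pow_mul_divByMonic_rootMultiplicity_eq (q j) 0]
    simp [hr, hm]
  have hr0 : ∀ j ∈ S, (r j).eval 0 ≠ 0 := by
    intro j hjS
    exact Polynomial.eval_divByMonic_pow_rootMultiplicity_ne_zero 0
      (Finset.mem_filter.1 hjS).2
  set H : ℝ → ℝ := fun y =>
    ∑ j ∈ Finset.range (n+1),
      (q j).eval y * y ^ ((j:ℝ) * θ) * v j y * y ^ (-(e j₁)) with hH
  have key : ∀ j, ∀ y : ℝ, 0 < y →
      (q j).eval y * y ^ ((j:ℝ)*θ) * v j y * y ^ (-(e j₁))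
        = (r j).eval y * y ^ (e j - e j₁) * v j y := by
    intro j y hy
    rw [hrq j y, ← Real.rpow_natCast y (m j),
      show e j - e j₁ = (m j : ℝ) + ((j:ℝ)*θ + (-(e j₁))) by simp [he]; ring,
      Real.rpow_add hy, Real.rpow_add hy]
    ring
  -- limit of each term
  have hterm : ∀ j ∈ Finset.range (n+1),
      Tendsto (fun y => (q j).eval y * y ^ ((j:ℝ)*θ) * v j y * y ^ (-(e j₁)))
        (𝓝[>] (0:ℝ)) (𝓝 (if j = j₁ then (r j₁).eval 0 * K j₁ else 0)) := by
    intro j hjr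
    have hjn : j ≤ n := by simpa [Nat.lt_succ_iff] using Finset.mem_range.1 hjr
    by_cases hqj : q j = 0
    · have hj' : j ≠ j₁ := by rintro rfl; exact hq₁ hqj
      simp only [hqj, if_neg hj', Polynomial.eval_zero, zero_mul]
      exact tendsto_const_nhds
    · have hjS : j ∈ S := by
        simp only [hS, Finset.mem_filter, Finset.mem_range]
        exact ⟨by omega, hqj⟩
      have hre : Tendsto (fun y => (r j).eval y) (𝓝[>] (0:ℝ)) (𝓝 ((r j).eval 0)) :=
        ((r j).continuous.tendsto 0).mono_left nhdsWithin_le_nhds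
      by_cases hj : j = j₁
      · subst hj
        simp only [if_pos rfl]
        have : Tendsto (fun y => (r j).eval y * v j y) (𝓝[>] (0:ℝ))
            (𝓝 ((r j).eval 0 * K j)) := hre.mul (hv j hjn)
        apply this.congr'
        filter_upwards [self_mem_nhdsWithin] with y hy
        rw [key j y hy, sub_self, Real.rpow_zero, mul_one]
      · simp only [if_neg hj]
        have hpos : 0 < e j - e j₁ := by linarith [hlt j hjS hj]
        have hpow : Tendsto (fun y : ℝ => y ^ (e j - e j₁)) (𝓝[>] (0:ℝ)) (𝓝 0) := by
          have := (Real.continuousAt_rpow_const 0 (e j - e j₁) (Or.inr hpos.le))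
          have h0 : (0:ℝ) ^ (e j - e j₁) = 0 := Real.zero_rpow (ne_of_gt hpos)
          simpa [h0] using this.continuousWithinAt.tendsto
        have : Tendsto (fun y => (r j).eval y * y ^ (e j - e j₁) * v j y)
            (𝓝[>] (0:ℝ)) (𝓝 ((r j).eval 0 * 0 * K j)) := (hre.mul hpow).mul (hv j hjn)
        rw [mul_zero, zero_mul] at this
        apply this.congr'
        filter_upwards [self_mem_nhdsWithin] with y hy
        rw [key j y hy]
  have hHlim : Tendsto H (𝓝[>] (0:ℝ)) (𝓝 ((r j₁).eval 0 * K j₁)) := by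
    have := tendsto_finset_sum (Finset.range (n+1)) hterm
    have hsum' : ∑ j ∈ Finset.range (n+1),
        (if j = j₁ then (r j₁).eval 0 * K j₁ else 0) = (r j₁).eval 0 * K j₁ := by
      rw [Finset.sum_ite_eq' (Finset.range (n+1))]
      simp [Finset.mem_range, Nat.lt_succ_iff, (Finset.mem_range.1 (Finset.mem_filter.1 hj₁S).1)]
    simpa [hH, hsum'] using this
  have hH0 : Tendsto H (𝓝[>] (0:ℝ)) (𝓝 0) := by
    apply tendsto_const_nhds.congr'
    filter_upwards [Ioo_mem_nhdsGT_of_mem (Set.mem_Ico.2 ⟨le_refl 0, hδ⟩)] with y hy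
    simp only [hH, ← Finset.sum_mul]
    rw [hsum y hy, zero_mul]
  have := tendsto_nhds_unique hH0 hHlim
  exact (mul_ne_zero (hr0 j₁ hj₁S) (ne_of_gt (hK j₁ (by
    have := (Finset.mem_filter.1 hj₁S).1; simpa [Nat.lt_succ_iff] using Finset.mem_range.1 this)))) this.symm


noncomputable def coeffPoly (P : MvPolynomial (Fin 2) ℝ) (j : ℕ) : Polynomial ℝ :=
  ∑ m ∈ P.support.filter (fun m => m 1 = j),
    Polynomial.C (MvPolynomial.coeff m P) * Polynomial.X ^ (m 0)

lemma eval_eq_coeffPoly_sum (P : MvPolynomial (Fin 2) ℝ) (x y : ℝ) :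
    MvPolynomial.eval ![x, y] P =
      ∑ j ∈ Finset.range (P.totalDegree + 1), (coeffPoly P j).eval x * y ^ j := by
  classical
  rw [MvPolynomial.eval_eq']
  rw [← Finset.sum_fiberwise_of_maps_to (g := fun m : Fin 2 →₀ ℕ => m 1)
    (t := Finset.range (P.totalDegree + 1)) ?_ _]
  · apply Finset.sum_congr rfl
    intro j hj
    simp only [coeffPoly, Polynomial.eval_finset_sum, Polynomial.eval_mul, Polynomial.eval_C,
      Polynomial.eval_pow, Polynomial.eval_X, Finset.sum_mul]
    apply Finset.sum_congr rfl
    intro m hm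
    have hm1 : m 1 = j := (Finset.mem_filter.1 hm).2
    rw [Fin.prod_univ_two]
    simp [hm1, mul_assoc]
  · intro m hm
    simp only [Finset.mem_range, Nat.lt_succ_iff]
    calc m 1 ≤ m.sum fun _ e => e := by
          rw [Finsupp.sum]
          by_cases h1 : 1 ∈ m.support
          · exact Finset.single_le_sum (f := fun i => m i) (fun i _ => Nat.zero_le _) h1
          · simp [Finsupp.notMem_support_iff.1 h1]
      _ ≤ P.totalDegree := MvPolynomial.le_totalDegree hm

lemma coeffPoly_ne_zero (P : MvPolynomial (Fin 2) ℝ) (hP : P ≠ 0) :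
    ∃ j, j ≤ P.totalDegree ∧ coeffPoly P j ≠ 0 := by
  classical
  by_contra hcon
  push_neg at hcon
  apply hP
  ext m
  rw [MvPolynomial.coeff_zero]
  by_contra hm
  have hms : m ∈ P.support := by rwa [MvPolynomial.mem_support_iff]
  have hj : m 1 ≤ P.totalDegree := by
    calc m 1 ≤ m.sum fun _ e => e := by
          rw [Finsupp.sum]
          by_cases h1 : 1 ∈ m.support
          · exact Finset.single_le_sum (f := fun i => m i) (fun i _ => Nat.zero_le _) h1
          · simp [Finsupp.notMem_support_iff.1 h1]
      _ ≤ P.totalDegree := MvPolynomial.le_totalDegree hms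
  have hc := hcon (m 1) hj
  have : (coeffPoly P (m 1)).coeff (m 0) = MvPolynomial.coeff m P := by
    rw [coeffPoly, Polynomial.finset_sum_coeff]
    have hmm : m ∈ P.support.filter (fun m' => m' 1 = m 1) := Finset.mem_filter.2 ⟨hms, rfl⟩
    rw [Finset.sum_eq_single_of_mem m hmm ?_]
    · simp
    · intro m' hm' hne
      simp only [Polynomial.coeff_C_mul, Polynomial.coeff_X_pow]
      have hm'1 : m' 1 = m 1 := (Finset.mem_filter.1 hm').2
      have : m' 0 ≠ m 0 := by
        intro h0
        apply hne
        ext i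
        fin_cases i
        · exact h0
        · exact hm'1
      simp [if_neg (Ne.symm this)]
  rw [hc] at this
  simp at this
  exact hm this.symm


lemma analyticAt_rpow_const' {x p : ℝ} (hx : 0 < x) :
    AnalyticAt ℝ (fun y : ℝ => y ^ p) x := by
  have h1 : AnalyticAt ℂ (fun z : ℂ => z ^ (p : ℂ)) (x : ℂ) :=
    analyticAt_id.cpow analyticAt_const (Complex.ofReal_mem_slitPlane.2 hx)
  have h3 : AnalyticAt ℝ (fun y : ℝ => (((y : ℂ)) ^ (p : ℂ)).re) x :=
    (Complex.reCLM.analyticAt _).comp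
      ((h1.restrictScalars).comp (Complex.ofRealCLM.analyticAt x))
  apply h3.congr
  filter_upwards [eventually_gt_nhds hx] with y hy
  rw [← Complex.ofReal_cpow hy.le, Complex.ofReal_re]

lemma continuation {a b β₆ α₃ : ℝ} (n : ℕ) (c : ℕ → Polynomial ℝ) {J : Set ℝ}
    (hJopen : IsOpen J) (hJconn : IsPreconnected J)
    (hJ : ∀ x ∈ J, 0 < x ∧ 0 < β₆ * x + α₃)
    {s t : ℝ} (hst : s < t) (hsub : Set.Ioo s t ⊆ J)
    (h0 : ∀ x ∈ Set.Ioo s t,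
      ∑ j ∈ Finset.range (n+1),
        (c j).eval x * (x ^ a * (β₆ * x + α₃) ^ b) ^ j = 0) :
    ∀ x ∈ J,
      ∑ j ∈ Finset.range (n+1),
        (c j).eval x * (x ^ a * (β₆ * x + α₃) ^ b) ^ j = 0 := by
  set F : ℝ → ℝ := fun x =>
    ∑ j ∈ Finset.range (n+1), (c j).eval x * (x ^ a * (β₆ * x + α₃) ^ b) ^ j with hF
  have hFan : AnalyticOnNhd ℝ F J := by
    intro x hx
    apply Finset.analyticAt_fun_sum
    intro j _
    have hx1 : AnalyticAt ℝ (fun y : ℝ => y ^ a) x := analyticAt_rpow_const' (hJ x hx).1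
    have hx2 : AnalyticAt ℝ (fun y : ℝ => (β₆ * y + α₃) ^ b) x := by
      have haff : AnalyticAt ℝ (fun y : ℝ => β₆ * y + α₃) x :=
        (analyticAt_const.mul analyticAt_id).add analyticAt_const
      have hcomp : AnalyticAt ℝ ((fun u : ℝ => u ^ b) ∘ (fun y : ℝ => β₆ * y + α₃)) x :=
        AnalyticAt.comp (analyticAt_rpow_const' (hJ x hx).2) haff
      simpa [Function.comp_def] using hcomp
    have hpoly : AnalyticAt ℝ (fun y : ℝ => (c j).eval y) x := by
      have h := (analyticAt_id : AnalyticAt ℝ id x).aeval_polynomial (c j)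
      simpa [Polynomial.coe_aeval_eq_eval] using h
    exact hpoly.mul ((hx1.mul hx2).pow j)
  have hz₀ : (s + t) / 2 ∈ Set.Ioo s t := ⟨by linarith, by linarith⟩
  have hev : F =ᶠ[𝓝 ((s + t)/2)] 0 := by
    filter_upwards [isOpen_Ioo.mem_nhds hz₀] with y hy
    exact h0 y hy
  have := hFan.eqOn_zero_of_preconnected_of_eventuallyEq_zero hJconn (hsub hz₀) hev
  intro x hx
  exact this hx

-- limit helper: affine map into 𝓝 of its value at 0
lemma affine_tendsto (p q : ℝ) :
    Tendsto (fun y : ℝ => p * y + q) (𝓝[>] (0:ℝ)) (𝓝 q) := by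
  have : Tendsto (fun y : ℝ => p * y + q) (𝓝 (0:ℝ)) (𝓝 (p * 0 + q)) :=
    ((continuous_const.mul continuous_id).add continuous_const).tendsto 0
  simpa using this.mono_left nhdsWithin_le_nhds

lemma rpow_affine_tendsto {q : ℝ} (p : ℝ) (hq : 0 < q) (e : ℝ) :
    Tendsto (fun y : ℝ => (p * y + q) ^ e) (𝓝[>] (0:ℝ)) (𝓝 (q ^ e)) := by
  exact ((Real.continuousAt_rpow_const q e (Or.inl hq.ne')).tendsto).comp (affine_tendsto p q)

lemma rpow_affine_tendsto' {q : ℝ} (p : ℝ) (hq : 0 < q) (e : ℝ) :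
    Tendsto (fun y : ℝ => (q + p * y) ^ e) (𝓝[>] (0:ℝ)) (𝓝 (q ^ e)) := by
  have h := rpow_affine_tendsto p hq e
  apply h.congr
  intro y; rw [add_comm]

lemma red0 {a b β₆ α₃ δ : ℝ} (ha : Irrational a) (hα₃ : 0 < α₃) (hδ : 0 < δ)
    (hu : ∀ x ∈ Set.Ioo (0:ℝ) δ, 0 < β₆ * x + α₃)
    (n : ℕ) (c : ℕ → Polynomial ℝ)
    (hsum : ∀ x ∈ Set.Ioo (0:ℝ) δ,
      ∑ j ∈ Finset.range (n+1),
        (c j).eval x * (x ^ ((j:ℝ)*a) * (β₆*x+α₃) ^ ((j:ℝ)*b)) = 0) :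
    ∀ j, j ≤ n → c j = 0 := by
  apply master ha n c (fun j x => (β₆*x+α₃) ^ ((j:ℝ)*b)) (fun j => α₃ ^ ((j:ℝ)*b))
    (fun j _ => Real.rpow_pos_of_pos hα₃ _)
    (fun j _ => rpow_affine_tendsto β₆ hα₃ _) hδ
  intro y hy
  rw [← hsum y hy]
  exact Finset.sum_congr rfl fun j _ => by ring

set_option maxHeartbeats 1000000 in
lemma redc {a b cc σ w δ : ℝ} (hb : Irrational b) (hcc : 0 < cc) (hσ : σ ≠ 0)
    (hw : 0 < w) (hδ : 0 < δ) (hpos : ∀ y ∈ Set.Ioo (0:ℝ) δ, 0 < cc + σ * y)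
    (n : ℕ) (c : ℕ → Polynomial ℝ)
    (hsum : ∀ y ∈ Set.Ioo (0:ℝ) δ,
      ∑ j ∈ Finset.range (n+1),
        (c j).eval (cc + σ * y) * ((cc + σ*y) ^ ((j:ℝ)*a) * (w*y) ^ ((j:ℝ)*b)) = 0) :
    ∀ j, j ≤ n → c j = 0 := by
  set q : ℕ → Polynomial ℝ :=
    fun j => (c j).comp (Polynomial.C cc + Polynomial.C σ * Polynomial.X) with hqdef
  have hsum' : ∀ y ∈ Set.Ioo (0:ℝ) δ,
      ∑ j ∈ Finset.range (n+1),
        (q j).eval y * y ^ ((j:ℝ) * b) * ((cc + σ*y) ^ ((j:ℝ)*a) * w ^ ((j:ℝ)*b)) = 0 := by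
    intro y hy
    rw [← hsum y hy]
    apply Finset.sum_congr rfl
    intro j _
    rw [hqdef]
    simp only [Polynomial.eval_comp, Polynomial.eval_add, Polynomial.eval_mul,
      Polynomial.eval_C, Polynomial.eval_X]
    rw [Real.mul_rpow hw.le hy.1.le]
    ring
  have key := master hb n q
    (fun j y => (cc + σ*y) ^ ((j:ℝ)*a) * w ^ ((j:ℝ)*b))
    (fun j => cc ^ ((j:ℝ)*a) * w ^ ((j:ℝ)*b))
    (fun j _ => mul_pos (Real.rpow_pos_of_pos hcc _) (Real.rpow_pos_of_pos hw _))
    (fun j _ => (rpow_affine_tendsto' σ hcc _).mul tendsto_const_nhds) hδ hsum'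
  intro j hj
  have hq := key j hj
  apply Polynomial.funext
  intro x
  have h2 : (c j).eval (cc + σ * ((x - cc)/σ)) = 0 := by
    have h3 := congrArg (Polynomial.eval ((x - cc)/σ)) hq
    simpa [hqdef, Polynomial.eval_comp] using h3
  rw [show cc + σ * ((x - cc)/σ) = x by field_simp; ring] at h2
  simp [h2]

set_option maxHeartbeats 1000000 in
lemma redinf {a b β₆ α₃ M : ℝ} (hab : Irrational (a+b)) (hβ₆ : 0 < β₆) (hM : 0 < M)
    (n : ℕ) (c : ℕ → Polynomial ℝ)
    (hpos : ∀ x : ℝ, M < x → 0 < β₆ * x + α₃)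
    (hsum : ∀ x : ℝ, M < x →
      ∑ j ∈ Finset.range (n+1),
        (c j).eval x * (x ^ ((j:ℝ)*a) * (β₆*x+α₃) ^ ((j:ℝ)*b)) = 0) :
    ∀ j, j ≤ n → c j = 0 := by
  classical
  set D : ℕ := (Finset.range (n+1)).sup (fun j => (c j).natDegree) with hD
  set q : ℕ → Polynomial ℝ := fun j =>
    ∑ i ∈ Finset.range (D+1), Polynomial.C ((c j).coeff i) * Polynomial.X ^ (D - i) with hq
  have hDle : ∀ j, j ≤ n → (c j).natDegree < D + 1 := fun j hj =>
    Nat.lt_succ_of_le (Finset.le_sup (f := fun j => (c j).natDegree)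
      (Finset.mem_range.2 (Nat.lt_succ_of_le hj)))
  have claimA : ∀ j, j ≤ n → ∀ y : ℝ, y ≠ 0 →
      (q j).eval y = y ^ D * (c j).eval (1/y) := by
    intro j hj y hy
    rw [Polynomial.eval_eq_sum_range' (hDle j hj), hq]
    simp only [Polynomial.eval_finset_sum, Polynomial.eval_mul, Polynomial.eval_C,
      Polynomial.eval_pow, Polynomial.eval_X]
    rw [Finset.mul_sum]
    apply Finset.sum_congr rfl
    intro i hi
    have hiD : i ≤ D := Nat.lt_succ_iff.1 (Finset.mem_range.1 hi)
    have hkey : (y:ℝ)^D * (y⁻¹)^i = y^(D-i) := by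
      have h1 : (y:ℝ)^D = y^(D-i) * y^i := by rw [← pow_add, Nat.sub_add_cancel hiD]
      rw [h1, mul_assoc, ← mul_pow, mul_inv_cancel₀ hy, one_pow, mul_one]
    rw [one_div, ← hkey]
    ring
  have claimB : ∀ j, j ≤ n → q j = 0 → c j = 0 := by
    intro j hj hqj
    apply Polynomial.eq_zero_of_infinite_isRoot
    apply Set.Infinite.mono (s := Set.Ioi (0:ℝ)) ?_ (Set.Ioi_infinite 0)
    intro x hx
    have hx0 : (0:ℝ) < x := hx
    have hA := claimA j hj (1/x) (by positivity)
    rw [hqj] at hA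
    simp only [Polynomial.eval_zero, one_div_one_div] at hA
    have hne : ((1:ℝ)/x)^D ≠ 0 := by positivity
    have h2 : (c j).eval x = 0 := by
      rcases mul_eq_zero.1 hA.symm with h | h
      · exact absurd h hne
      · exact h
    exact h2
  have hδ : (0:ℝ) < M⁻¹ := by positivity
  have hsum' : ∀ y ∈ Set.Ioo (0:ℝ) M⁻¹,
      ∑ k ∈ Finset.range (n+1),
        (q (n-k)).eval y * y ^ ((k:ℝ) * (a+b)) * ((β₆+α₃*y) ^ (((n-k : ℕ):ℝ)*b)) = 0 := by
    intro y hy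
    have hy0 : (0:ℝ) < y := hy.1
    have hx : M < 1/y := by
      have h6 : M * y < 1 := by
        calc M * y < M * M⁻¹ := mul_lt_mul_of_pos_left hy.2 hM
          _ = 1 := mul_inv_cancel₀ hM.ne'
      rw [lt_div_iff₀ hy0]
      exact h6
    have hu : 0 < β₆*(1/y)+α₃ := hpos _ hx
    have e2 : β₆*(1/y)+α₃ = (β₆+α₃*y)/y := by field_simp
    have hnum : 0 < β₆ + α₃*y := by
      have h3 : (0:ℝ) < (β₆+α₃*y)/y := by rw [← e2]; exact hu
      have h4 := mul_pos h3 hy0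
      rwa [div_mul_cancel₀ _ hy0.ne'] at h4
    have h0 := hsum (1/y) hx
    have hterm : ∀ j ∈ Finset.range (n+1),
        (c j).eval (1/y) * ((1/y) ^ ((j:ℝ)*a) * (β₆*(1/y)+α₃) ^ ((j:ℝ)*b))
            * y ^ ((D:ℝ) + (n:ℝ)*(a+b))
          = (q j).eval y * y ^ (((n-j : ℕ):ℝ)*(a+b)) * (β₆+α₃*y) ^ ((j:ℝ)*b) := by
      intro j hj
      have hjn : j ≤ n := Nat.lt_succ_iff.1 (Finset.mem_range.1 hj)
      have hA := claimA j hjn y hy0.ne'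
      have e0 : (c j).eval (1/y) = (q j).eval y * (y ^ ((D:ℕ):ℝ))⁻¹ := by
        rw [hA, Real.rpow_natCast]
        field_simp
      have e1 : (1/y) ^ ((j:ℝ)*a) = (y ^ ((j:ℝ)*a))⁻¹ := by
        rw [one_div, Real.inv_rpow hy0.le]
      have e3 : ((β₆+α₃*y)/y) ^ ((j:ℝ)*b)
          = (β₆+α₃*y) ^ ((j:ℝ)*b) * (y ^ ((j:ℝ)*b))⁻¹ := by
        rw [Real.div_rpow hnum.le hy0.le, div_eq_mul_inv]
      have collapse : (y ^ ((D:ℕ):ℝ))⁻¹ * ((y ^ ((j:ℝ)*a))⁻¹ * (y ^ ((j:ℝ)*b))⁻¹)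
          * y ^ ((D:ℝ) + (n:ℝ)*(a+b)) = y ^ (((n-j : ℕ):ℝ)*(a+b)) := by
        rw [← Real.rpow_neg hy0.le, ← Real.rpow_neg hy0.le, ← Real.rpow_neg hy0.le,
          ← Real.rpow_add hy0, ← Real.rpow_add hy0, ← Real.rpow_add hy0]
        congr 1
        push_cast [Nat.cast_sub hjn]
        ring
      calc (c j).eval (1/y) * ((1/y) ^ ((j:ℝ)*a) * (β₆*(1/y)+α₃) ^ ((j:ℝ)*b))
            * y ^ ((D:ℝ) + (n:ℝ)*(a+b))
          = (q j).eval y * (β₆+α₃*y) ^ ((j:ℝ)*b) *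
            ((y ^ ((D:ℕ):ℝ))⁻¹ * ((y ^ ((j:ℝ)*a))⁻¹ * (y ^ ((j:ℝ)*b))⁻¹)
              * y ^ ((D:ℝ) + (n:ℝ)*(a+b))) := by
            rw [e0, e1, e2, e3]; ring
        _ = (q j).eval y * (β₆+α₃*y) ^ ((j:ℝ)*b) * y ^ (((n-j : ℕ):ℝ)*(a+b)) := by
            rw [collapse]
        _ = _ := by ring
    have h1 : ∑ j ∈ Finset.range (n+1),
        (q j).eval y * y ^ (((n-j : ℕ):ℝ)*(a+b)) * (β₆+α₃*y) ^ ((j:ℝ)*b) = 0 := by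
      rw [← Finset.sum_congr rfl hterm, ← Finset.sum_mul, h0, zero_mul]
    have h3 : ∀ k ∈ Finset.range (n+1),
        (q (n-k)).eval y * y ^ ((k:ℝ) * (a+b)) * ((β₆+α₃*y) ^ (((n-k : ℕ):ℝ)*b))
        = (fun j => (q j).eval y * y ^ (((n-j : ℕ):ℝ)*(a+b)) * (β₆+α₃*y) ^ ((j:ℝ)*b)) (n-k) := by
      intro k hk
      have hkn : k ≤ n := Nat.lt_succ_iff.1 (Finset.mem_range.1 hk)
      simp only
      rw [Nat.sub_sub_self hkn]
    rw [Finset.sum_congr rfl h3]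
    have h4 := Finset.sum_range_reflect
      (fun j => (q j).eval y * y ^ (((n-j : ℕ):ℝ)*(a+b)) * (β₆+α₃*y) ^ ((j:ℝ)*b)) (n+1)
    simp only [Nat.add_sub_cancel] at h4
    rw [h4]
    exact h1
  have key := master hab n (fun k => q (n-k))
    (fun k z => (β₆+α₃*z) ^ (((n-k : ℕ):ℝ)*b))
    (fun k => β₆ ^ (((n-k : ℕ):ℝ)*b))
    (fun k _ => Real.rpow_pos_of_pos hβ₆ _)
    (fun k _ => rpow_affine_tendsto' α₃ hβ₆ _) hδ hsum'
  intro j hj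
  apply claimB j hj
  have h5 : q (n - (n - j)) = 0 := key (n-j) (Nat.sub_le n j)
  rwa [Nat.sub_sub_self hj] at h5


lemma pow_to_rpow {x u : ℝ} (hx : 0 < x) (hu : 0 < u) (a b : ℝ) (j : ℕ) :
    (x ^ a * u ^ b) ^ j = x ^ ((j:ℝ)*a) * u ^ ((j:ℝ)*b) := by
  rw [mul_pow, ← Real.rpow_natCast (x^a) j, ← Real.rpow_natCast (u^b) j,
    ← Real.rpow_mul hx.le, ← Real.rpow_mul hu.le, mul_comm a, mul_comm b]

set_option maxHeartbeats 1000000 in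
/-- Condition (H1) in Section 4.1: `Ω(x) = x^(α₁/α₃) (β₆ x + α₃)^(β₂/β₆ - α₁/α₃)` is
transcendental over the rational functions on any nonempty open interval contained in
`{x | x > 0 ∧ β₆ x + α₃ > 0}`, provided `α₃ β₆ ≠ 0` and `α₁/α₃ ∉ ℚ` or
`β₂/β₆ - α₁/α₃ ∉ ℚ`. -/
theorem H1_sec41 (α₁ α₃ β₂ β₆ : ℝ) (h : α₃ * β₆ ≠ 0)
    (hirr : Irrational (α₁ / α₃) ∨ Irrational (β₂ / β₆ - α₁ / α₃))
    (s t : ℝ) (hst : s < t)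
    (hI : Set.Ioo s t ⊆ {x : ℝ | 0 < x ∧ 0 < β₆ * x + α₃}) :
    ¬ ∃ P : MvPolynomial (Fin 2) ℝ, P ≠ 0 ∧
      ∀ x ∈ Set.Ioo s t,
        MvPolynomial.eval
          ![x, x ^ (α₁ / α₃) * (β₆ * x + α₃) ^ (β₂ / β₆ - α₁ / α₃)] P = 0 := by
  rintro ⟨P, hP, hPeval⟩
  have hα₃ : α₃ ≠ 0 := fun hh => h (by simp [hh])
  have hβ₆ : β₆ ≠ 0 := fun hh => h (by simp [hh])
  set a : ℝ := α₁ / α₃ with ha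
  set b : ℝ := β₂ / β₆ - α₁ / α₃ with hb
  set n : ℕ := P.totalDegree with hn
  set c : ℕ → Polynomial ℝ := coeffPoly P with hc
  obtain ⟨j₀, hj₀, hc₀⟩ := coeffPoly_ne_zero P hP
  have hbase : ∀ x ∈ Set.Ioo s t,
      ∑ j ∈ Finset.range (n+1), (c j).eval x * (x ^ a * (β₆*x+α₃) ^ b) ^ j = 0 := by
    intro x hx
    rw [hc, hn, ← eval_eq_coeffPoly_sum P x (x ^ a * (β₆*x+α₃) ^ b)]
    exact hPeval x hx
  suffices hzero : ∀ j, j ≤ n → c j = 0 by exact hc₀ (hzero j₀ hj₀)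
  rcases lt_trichotomy α₃ 0 with hα | hα | hα
  · -- α₃ < 0
    rcases lt_trichotomy β₆ 0 with hβ | hβ | hβ
    · -- impossible: domain empty
      exfalso
      have hx : (s+t)/2 ∈ Set.Ioo s t := ⟨by linarith, by linarith⟩
      have h1 := hI hx
      have h2 : 0 < (s+t)/2 := h1.1
      have h3 : 0 < β₆ * ((s+t)/2) + α₃ := h1.2
      nlinarith [mul_neg_of_neg_of_pos hβ h2]
    · exact absurd hβ hβ₆
    · -- β₆ > 0, J = Ioi c0
      set c0 : ℝ := -α₃/β₆ with hc0def
      have hc0 : 0 < c0 := div_pos (by linarith) hβ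
      have hβc0 : β₆ * c0 + α₃ = 0 := by rw [hc0def]; field_simp; ring
      have hJ : ∀ x ∈ Set.Ioi c0, 0 < x ∧ 0 < β₆ * x + α₃ := by
        intro x hx
        refine ⟨lt_trans hc0 hx, ?_⟩
        have he : β₆ * x + α₃ = β₆ * (x - c0) := by linear_combination hβc0
        rw [he]
        exact mul_pos hβ (sub_pos.2 hx)
      have hsub : Set.Ioo s t ⊆ Set.Ioi c0 := by
        intro x hx
        have h1 := hI hx
        have h7 : 0 < β₆ * (x - c0) := by nlinarith [h1.2, hβc0]
        have h8 := div_pos h7 hβ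
        rw [mul_div_cancel_left₀ _ hβ.ne'] at h8
        simpa using sub_pos.1 h8
      have hall := continuation n c isOpen_Ioi isPreconnected_Ioi hJ hst hsub hbase
      have hall' : ∀ x ∈ Set.Ioi c0,
          ∑ j ∈ Finset.range (n+1),
            (c j).eval x * (x ^ ((j:ℝ)*a) * (β₆*x+α₃) ^ ((j:ℝ)*b)) = 0 := by
        intro x hx
        rw [← hall x hx]
        exact Finset.sum_congr rfl fun j _ => by
          rw [pow_to_rpow (hJ x hx).1 (hJ x hx).2]
      by_cases hbirr : Irrational b
      · -- finite endpoint c0, substitution x = c0 + y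
        apply redc (a := a) hbirr hc0 one_ne_zero hβ one_pos
          (fun y hy => by nlinarith [hy.1]) n c
        intro y hy
        have hmem : c0 + 1*y ∈ Set.Ioi c0 := by simp only [Set.mem_Ioi]; linarith [hy.1]
        have hwy : β₆ * (c0 + 1*y) + α₃ = β₆ * y := by linear_combination hβc0
        have h9 := hall' (c0 + 1*y) hmem
        rw [hwy] at h9
        exact h9
      · have hairr : Irrational a := hirr.resolve_right hbirr
        obtain ⟨qb, hqb⟩ := not_not.1 hbirr
        have hab : Irrational (a + b) := by
          rw [← hqb]
          exact hairr.add_ratCast qb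
        apply redinf hab hβ hc0 n c (fun x hx => (hJ x hx).2)
        intro x hx
        exact hall' x hx
  · exact absurd hα hα₃
  · -- α₃ > 0
    rcases lt_trichotomy β₆ 0 with hβ | hβ | hβ
    · -- β₆ < 0, J = Ioo 0 c0
      set c0 : ℝ := -α₃/β₆ with hc0def
      have hc0 : 0 < c0 := div_pos_iff.2 (Or.inr ⟨by linarith, hβ⟩)
      have hβc0 : β₆ * c0 + α₃ = 0 := by rw [hc0def]; field_simp; ring
      have hJ : ∀ x ∈ Set.Ioo 0 c0, 0 < x ∧ 0 < β₆ * x + α₃ := by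
        intro x hx
        refine ⟨hx.1, ?_⟩
        have he : β₆ * x + α₃ = (-β₆) * (c0 - x) := by linear_combination hβc0
        rw [he]
        exact mul_pos (by linarith) (sub_pos.2 hx.2)
      have hsub : Set.Ioo s t ⊆ Set.Ioo 0 c0 := by
        intro x hx
        have h1 := hI hx
        refine ⟨h1.1, ?_⟩
        have h7 : 0 < (-β₆) * (c0 - x) := by nlinarith [h1.2, hβc0]
        have h8 := div_pos h7 (by linarith : (0:ℝ) < -β₆)
        rw [mul_div_cancel_left₀ _ (by linarith : (-β₆ : ℝ) ≠ 0)] at h8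
        linarith [sub_pos.1 h8]
      have hall := continuation n c isOpen_Ioo isPreconnected_Ioo hJ hst hsub hbase
      have hall' : ∀ x ∈ Set.Ioo 0 c0,
          ∑ j ∈ Finset.range (n+1),
            (c j).eval x * (x ^ ((j:ℝ)*a) * (β₆*x+α₃) ^ ((j:ℝ)*b)) = 0 := by
        intro x hx
        rw [← hall x hx]
        exact Finset.sum_congr rfl fun j _ => by
          rw [pow_to_rpow (hJ x hx).1 (hJ x hx).2]
      by_cases hairr : Irrational a
      · -- endpoint 0
        apply red0 hairr hα hc0 (fun x hx => (hJ x hx).2) n c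
        intro x hx
        exact hall' x hx
      · have hbirr : Irrational b := hirr.resolve_left hairr
        -- finite right endpoint c0, substitution x = c0 - y
        apply redc (a := a) hbirr hc0 (σ := -1) (by norm_num) (w := -β₆)
          (by linarith) hc0 (fun y hy => by nlinarith [hy.1, hy.2]) n c
        intro y hy
        have hmem : c0 + (-1)*y ∈ Set.Ioo 0 c0 := by
          constructor
          · nlinarith [hy.1, hy.2]
          · nlinarith [hy.1]
        have hwy : β₆ * (c0 + (-1)*y) + α₃ = (-β₆) * y := by linear_combination hβc0
        have h9 := hall' (c0 + (-1)*y) hmem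
        rw [hwy] at h9
        exact h9
    · exact absurd hβ hβ₆
    · -- β₆ > 0, J = Ioi 0
      have hJ : ∀ x ∈ Set.Ioi (0:ℝ), 0 < x ∧ 0 < β₆ * x + α₃ := by
        intro x hx
        exact ⟨hx, by nlinarith [mul_pos hβ (show (0:ℝ) < x from hx)]⟩
      have hsub : Set.Ioo s t ⊆ Set.Ioi 0 := fun x hx => (hI hx).1
      have hall := continuation n c isOpen_Ioi isPreconnected_Ioi hJ hst hsub hbase
      have hall' : ∀ x ∈ Set.Ioi (0:ℝ),
          ∑ j ∈ Finset.range (n+1),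
            (c j).eval x * (x ^ ((j:ℝ)*a) * (β₆*x+α₃) ^ ((j:ℝ)*b)) = 0 := by
        intro x hx
        rw [← hall x hx]
        exact Finset.sum_congr rfl fun j _ => by
          rw [pow_to_rpow (hJ x hx).1 (hJ x hx).2]
      by_cases hairr : Irrational a
      · apply red0 hairr hα one_pos (fun x hx => (hJ x (Set.mem_Ioi.2 hx.1)).2) n c
        intro x hx
        exact hall' x (Set.mem_Ioi.2 hx.1)
      · have hbirr : Irrational b := hirr.resolve_left hairr
        obtain ⟨qa, hqa⟩ := not_not.1 hairr
        have hab : Irrational (a + b) := by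
          rw [← hqa]
          exact hbirr.ratCast_add qa
        apply redinf hab hβ one_pos n c
          (fun x hx => (hJ x (Set.mem_Ioi.2 (by linarith))).2)
        intro x hx
        exact hall' x (Set.mem_Ioi.2 (by linarith))
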